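/- Let q be a prime power and let m, d', ε be integers with 1 ≤ d' ≤ m and ε ≥ 1. Let X ⊆ F_q^m be a code in which any two distinct words are at Hamming distance at least d', such that the zero vector belongs to X and every nonzero word of X has weight at least d' + ε. Then |X| ≤ A_q(m,d') − |B(ε,m)|/|B(d'−1,m)| + 1 (an inequality of rational numbers). -/

import Mathlib

open Finset

/-- `|B(l,m)| = ∑_{j=0}^{l} C(m,j)(q−1)^j`, the number of vectors of `F_q^m`
of Hamming weight at most `l`. -/
def ballCard (q l m : ℕ) : ℕ := ∑ j ∈ Finset.range (l + 1), m.choose j * (q - 1) ^ j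

/-- `A_q(n,d)`: the maximum cardinality of a (nonempty) code `C ⊆ F^n` in which any two
distinct words are at Hamming distance at least `d`. -/
noncomputable def maxCodeCard (F : Type) [Fintype F] [DecidableEq F] (n d : ℕ) : ℕ :=
  sSup {M | ∃ C : Finset (Fin n → F), C.Nonempty ∧ C.card = M ∧
    ∀ c ∈ C, ∀ c' ∈ C, c ≠ c' → d ≤ hammingDist c c'}

section Aux

variable {m : ℕ} {F : Type} [Field F] [Fintype F] [DecidableEq F]

lemma fiber_eq (b : Finset (Fin m)) :
    (univ.filter (fun v : Fin m → F => (univ.filter (fun i => v i ≠ 0)) = b))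
      = Fintype.piFinset (fun i => if i ∈ b then univ.erase (0:F) else {0}) := by
  ext v
  simp only [mem_filter, mem_univ, true_and, Fintype.mem_piFinset, Finset.ext_iff,
    mem_filter, mem_univ, true_and]
  constructor
  · intro h i
    by_cases hib : i ∈ b
    · simp only [hib, if_true, Finset.mem_erase, Finset.mem_univ, and_true]
      exact (h i).mpr hib
    · simp only [hib, if_false, Finset.mem_singleton]
      by_contra hne
      exact hib ((h i).mp hne)
  · intro h i
    specialize h i
    by_cases hib : i ∈ b
    · simp only [hib, if_true, Finset.mem_erase] at h
      exact ⟨fun _ => hib, fun _ => h.1⟩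
    · simp only [hib, if_false, Finset.mem_singleton] at h
      exact ⟨fun hv => absurd h hv, fun hb => absurd hb hib⟩

lemma card_fiber (q : ℕ) (hF : Fintype.card F = q) (b : Finset (Fin m)) :
    (univ.filter (fun v : Fin m → F => (univ.filter (fun i => v i ≠ 0)) = b)).card
      = (q - 1) ^ b.card := by
  rw [fiber_eq, Fintype.card_piFinset]
  have : ∀ i : Fin m, (if i ∈ b then univ.erase (0:F) else {0}).card
      = if i ∈ b then q - 1 else 1 := by
    intro i
    by_cases hib : i ∈ b <;> simp [hib, card_erase_of_mem, hF]
  simp_rw [this]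
  rw [Fintype.prod_ite_mem, prod_const]

lemma card_ball (q : ℕ) (hF : Fintype.card F = q) (l : ℕ) :
    (univ.filter (fun v : Fin m → F => hammingNorm v ≤ l)).card = ballCard q l m := by
  have hnorm : ∀ v : Fin m → F, hammingNorm v = (univ.filter (fun i => v i ≠ 0)).card :=
    fun v => rfl
  rw [card_eq_sum_card_fiberwise (f := fun v : Fin m → F => univ.filter (fun i => v i ≠ 0))
      (t := (univ : Finset (Fin m)).powerset.filter (fun b => b.card ≤ l))]
  · have step : ∀ b ∈ (univ : Finset (Fin m)).powerset.filter (fun b => b.card ≤ l),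
        ((univ.filter (fun v : Fin m → F => hammingNorm v ≤ l)).filter
          (fun v => (univ.filter (fun i => v i ≠ 0)) = b)).card = (q - 1) ^ b.card := by
      intro b hb
      simp only [mem_filter, mem_powerset] at hb
      rw [← card_fiber q hF b]
      congr 1
      ext v
      simp only [mem_filter, mem_univ, true_and, and_iff_right_iff_imp]
      intro hv
      rw [hnorm v, hv]; exact hb.2
    rw [Finset.sum_congr rfl step]
    rw [← Finset.sum_fiberwise_of_maps_to (g := Finset.card) (t := Finset.range (l+1))
      (by intro b hb; simp only [mem_filter, mem_powerset] at hb; simp [Nat.lt_succ, hb.2])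
      (fun b : Finset (Fin m) => (q-1)^b.card)]
    unfold ballCard
    refine Finset.sum_congr rfl ?_
    intro j hj
    rw [Finset.mem_range, Nat.lt_succ] at hj
    have : ((univ : Finset (Fin m)).powerset.filter (fun b => b.card ≤ l)).filter
        (fun b => b.card = j) = Finset.powersetCard j univ := by
      ext b
      simp only [mem_filter, mem_powerset, Finset.mem_powersetCard_univ]
      constructor
      · rintro ⟨_, h⟩; exact h
      · intro h; exact ⟨⟨subset_univ b, h ▸ hj⟩, h⟩
    rw [this]
    calc ∑ b ∈ Finset.powersetCard j univ, (q - 1) ^ b.card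
        = ∑ _b ∈ Finset.powersetCard j (univ : Finset (Fin m)), (q - 1) ^ j :=
          Finset.sum_congr rfl (fun b hb => by
            rw [Finset.mem_powersetCard_univ] at hb; rw [hb])
      _ = m.choose j * (q - 1) ^ j := by
          rw [Finset.sum_const, Finset.card_powersetCard, card_univ, Fintype.card_fin,
            smul_eq_mul]
  · intro v hv
    simp only [Finset.mem_coe, mem_filter, mem_univ, true_and] at hv ⊢
    exact ⟨Finset.mem_powerset.mpr (subset_univ _), (hnorm v) ▸ hv⟩

lemma card_ball_around (y : Fin m → F) (r : ℕ) :
    (univ.filter (fun v : Fin m → F => hammingDist v y ≤ r)).card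
      = (univ.filter (fun v : Fin m → F => hammingNorm v ≤ r)).card := by
  apply Finset.card_nbij' (i := fun v => v - y) (j := fun v => v + y)
  · intro v hv
    simp only [Finset.mem_coe, mem_filter, mem_univ, true_and] at hv ⊢
    rwa [← neg_add_eq_sub, ← hammingDist_eq_hammingNorm, hammingDist_comm]
  · intro v hv
    simp only [Finset.mem_coe, mem_filter, mem_univ, true_and] at hv ⊢
    rwa [hammingDist_comm, hammingDist_eq_hammingNorm, neg_add_eq_sub, add_sub_cancel_right]
  · intro v _; simp
  · intro v _; simp

end Aux

/-- A code of distance `d'` containing `0` whose nonzero words all have weight at least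
`d' + ε` has size at most `A_q(m,d') − |B(ε,m)|/|B(d'−1,m)| + 1`. -/
theorem size_bound_with_zero (q m d' ε : ℕ) (hq : IsPrimePow q)
    (F : Type) [Field F] [Fintype F] [DecidableEq F] (hF : Fintype.card F = q)
    (hd1 : 1 ≤ d') (hdm : d' ≤ m) (hε : 1 ≤ ε)
    (X : Finset (Fin m → F))
    (hdist : ∀ c ∈ X, ∀ c' ∈ X, c ≠ c' → d' ≤ hammingDist c c')
    (h0 : (0 : Fin m → F) ∈ X)
    (hw : ∀ c ∈ X, c ≠ 0 → d' + ε ≤ hammingNorm c) :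
    (X.card : ℚ) ≤ (maxCodeCard F m d' : ℚ)
      - (ballCard q ε m : ℚ) / (ballCard q (d' - 1) m : ℚ) + 1 := by
  classical
  set Bε : Finset (Fin m → F) := univ.filter (fun v => hammingNorm v ≤ ε) with hBε
  -- the collection of codes inside Bε
  set P : Finset (Finset (Fin m → F)) :=
    Bε.powerset.filter (fun Y => ∀ c ∈ Y, ∀ c' ∈ Y, c ≠ c' → d' ≤ hammingDist c c') with hP
  have h0B : (0 : Fin m → F) ∈ Bε := by simp [hBε]
  have hPne : P.Nonempty := by
    refine ⟨{0}, ?_⟩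
    simp only [hP, mem_filter, mem_powerset, singleton_subset_iff, h0B, true_and]
    intro c hc c' hc' hne
    simp only [mem_singleton] at hc hc'
    exact absurd (hc.trans hc'.symm) hne
  obtain ⟨Y, hYP, hYmax⟩ := Finset.exists_max_image P Finset.card hPne
  simp only [hP, mem_filter, mem_powerset] at hYP
  obtain ⟨hYB, hYcode⟩ := hYP
  have hYne : Y.Nonempty := by
    rcases Y.eq_empty_or_nonempty with h | h
    · exfalso
      have := hYmax {0} (by
        simp only [hP, mem_filter, mem_powerset, singleton_subset_iff, h0B, true_and]
        intro c hc c' hc' hne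
        simp only [mem_singleton] at hc hc'
        exact absurd (hc.trans hc'.symm) hne)
      simp [h] at this
    · exact h
  -- covering property of Y
  have hcover : ∀ x ∈ Bε, ∃ y ∈ Y, hammingDist x y ≤ d' - 1 := by
    intro x hx
    by_contra hcon
    push_neg at hcon
    have hfar : ∀ y ∈ Y, d' ≤ hammingDist x y := by
      intro y hy
      have := hcon y hy
      omega
    have hxY : x ∉ Y := by
      intro hxY
      have := hfar x hxY
      simp at this; omega
    have hins : insert x Y ∈ P := by
      simp only [hP, mem_filter, mem_powerset, insert_subset_iff]
      refine ⟨⟨hx, hYB⟩, ?_⟩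
      intro c hc c' hc' hne
      rcases mem_insert.mp hc with hcx | hcY
      · rcases mem_insert.mp hc' with hcx' | hcY'
        · exact absurd (hcx.trans hcx'.symm) hne
        · rw [hcx]; exact hfar c' hcY'
      · rcases mem_insert.mp hc' with hcx' | hcY'
        · rw [hcx', hammingDist_comm]; exact hfar c hcY
        · exact hYcode c hcY c' hcY' hne
    have := hYmax _ hins
    rw [Finset.card_insert_of_notMem hxY] at this
    omega
  -- covering bound : |Bε| ≤ |Y| * ballCard q (d'-1) m
  have hcount : Bε.card ≤ Y.card * ballCard q (d' - 1) m := by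
    have hsub : Bε ⊆ Y.biUnion (fun y => univ.filter (fun v => hammingDist v y ≤ d' - 1)) := by
      intro x hx
      obtain ⟨y, hy, hxy⟩ := hcover x hx
      exact Finset.mem_biUnion.mpr ⟨y, hy, by simp [hxy]⟩
    calc Bε.card ≤ (Y.biUnion (fun y => univ.filter (fun v => hammingDist v y ≤ d' - 1))).card :=
          Finset.card_le_card hsub
      _ ≤ ∑ y ∈ Y, (univ.filter (fun v => hammingDist v y ≤ d' - 1)).card :=
          Finset.card_biUnion_le
      _ = ∑ y ∈ Y, ballCard q (d' - 1) m := by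
          refine Finset.sum_congr rfl fun y _ => ?_
          rw [card_ball_around, card_ball q hF]
      _ = Y.card * ballCard q (d' - 1) m := by rw [Finset.sum_const, smul_eq_mul]
  have hBcard : Bε.card = ballCard q ε m := card_ball q hF ε
  -- the combined code
  set Z : Finset (Fin m → F) := (X.erase 0) ∪ Y with hZ
  have hdisj : Disjoint (X.erase 0) Y := by
    rw [Finset.disjoint_left]
    intro v hv hvY
    have hvX := Finset.mem_of_mem_erase hv
    have hv0 : v ≠ 0 := Finset.ne_of_mem_erase hv
    have h1 := hw v hvX hv0
    have h2 : hammingNorm v ≤ ε := by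
      have := hYB hvY
      simp only [hBε, mem_filter] at this
      exact this.2
    omega
  have hZcode : ∀ c ∈ Z, ∀ c' ∈ Z, c ≠ c' → d' ≤ hammingDist c c' := by
    have key : ∀ x ∈ X.erase 0, ∀ y ∈ Y, d' ≤ hammingDist x y := by
      intro x hx y hy
      have hxX := Finset.mem_of_mem_erase hx
      have hx0 : x ≠ 0 := Finset.ne_of_mem_erase hx
      have h1 := hw x hxX hx0
      have h2 : hammingNorm y ≤ ε := by
        have := hYB hy
        simp only [hBε, mem_filter] at this
        exact this.2
      have htri : hammingNorm x ≤ hammingDist x y + hammingNorm y := by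
        have := hammingDist_triangle x y 0
        simpa [hammingDist_zero_right] using this
      omega
    intro c hc c' hc' hne
    rcases Finset.mem_union.mp hc with hc | hc <;> rcases Finset.mem_union.mp hc' with hc' | hc'
    · exact hdist c (Finset.mem_of_mem_erase hc) c' (Finset.mem_of_mem_erase hc') hne
    · exact key c hc c' hc'
    · rw [hammingDist_comm]; exact key c' hc' c hc
    · exact hYcode c hc c' hc' hne
  have hZne : Z.Nonempty := Finset.Nonempty.mono Finset.subset_union_right hYne
  -- Z.card ≤ maxCodeCard
  have hle : Z.card ≤ maxCodeCard F m d' := by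
    apply le_csSup
    · refine ⟨Fintype.card (Fin m → F), ?_⟩
      rintro M ⟨C, _, rfl, _⟩
      exact Finset.card_le_univ C
    · exact ⟨Z, hZne, rfl, hZcode⟩
  have hZcard : Z.card = X.card - 1 + Y.card := by
    rw [hZ, Finset.card_union_of_disjoint hdisj, Finset.card_erase_of_mem h0]
  have hX1 : 1 ≤ X.card := Finset.card_pos.mpr ⟨0, h0⟩
  -- positivity of denominator
  have hden : 0 < ballCard q (d' - 1) m := by
    unfold ballCard
    have : 0 < m.choose 0 * (q - 1) ^ 0 := by simp
    exact lt_of_lt_of_le this (Finset.single_le_sum (f := fun j => m.choose j * (q-1)^j)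
      (fun j _ => Nat.zero_le _) (Finset.mem_range.mpr (Nat.succ_pos _)))
  -- now assemble over ℚ
  have hA : (X.card : ℚ) - 1 + Y.card ≤ maxCodeCard F m d' := by
    have : ((X.card - 1 + Y.card : ℕ) : ℚ) ≤ (maxCodeCard F m d' : ℚ) := by
      exact_mod_cast hZcard ▸ hle
    rw [Nat.cast_add, Nat.cast_sub hX1] at this
    simpa using this
  have hratio : (ballCard q ε m : ℚ) / (ballCard q (d' - 1) m : ℚ) ≤ (Y.card : ℚ) := by
    rw [div_le_iff₀ (by exact_mod_cast hden)]
    have : (ballCard q ε m : ℚ) ≤ (Y.card : ℚ) * (ballCard q (d' - 1) m : ℚ) := by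
      exact_mod_cast hBcard ▸ hcount
    exact this
  linarith
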